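/- arXiv:1003.1621 — 2 statements merged into one kernel-verified Lean document; each statement's English description precedes it below -/
import Mathlib

section
/- Let A_1,...,A_N be mutually commuting Hermitian matrices, ρ_t = Z(t)^{-1} exp(-Σ_j μ_j(t) A_j(t)) where A_j(t) = e^{itH}A_j e^{-itH}, w_t(X) = tr(ρ_t X), and let P_t be the projection built from w_t and the A_j(t) as in the projection method. Then for any Y in span{I, A_1(t),...,A_N(t)}, P_t(δ(Y)) = 0, where δ(X) = HX - XH. -/
open Matrix NormedSpace

lemma aux_trace {n : ℕ} (ρ H B C : Matrix (Fin n) (Fin n) ℂ)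
    (h1 : ρ * B = B * ρ) (h2 : ρ * C = C * ρ) (h3 : B * C = C * B) :
    Matrix.trace (ρ * ((H * B - B * H) * C)) = 0 := by
  have t1 : Matrix.trace (ρ * (H * B * C)) = Matrix.trace (ρ * (B * C) * H) := by
    rw [show ρ * (H * B * C) = (ρ * H) * (B * C) by noncomm_ring,
      Matrix.trace_mul_comm (ρ * H) (B * C),
      show (B * C) * (ρ * H) = (B * C * ρ) * H by noncomm_ring,
      show B * C * ρ = ρ * (B * C) by
        rw [mul_assoc, ← h2, ← mul_assoc, ← h1, mul_assoc]]
  have t2 : Matrix.trace (ρ * (B * H * C)) = Matrix.trace (ρ * (B * C) * H) := by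
    rw [show ρ * (B * H * C) = (ρ * B * H) * C by noncomm_ring,
      Matrix.trace_mul_comm (ρ * B * H) C,
      show C * (ρ * B * H) = (C * ρ * B) * H by noncomm_ring,
      show C * ρ * B = ρ * (B * C) by rw [← h2, mul_assoc, ← h3, ← mul_assoc]]
  have : ρ * ((H * B - B * H) * C) = ρ * (H * B * C) - ρ * (B * H * C) := by
    noncomm_ring
  rw [this, Matrix.trace_sub, t1, t2, sub_self]

set_option maxHeartbeats 1000000 in
/-- For the maximum-entropy reference state `w_t` and the associated projection `P_t`,
one has `P_t(δ(Y)) = 0` for every `Y` in the span of `{I, A_1(t), ..., A_N(t)}`,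
where `δ(X) = HX - XH`. -/
theorem stmt_6 {n N : ℕ} (H : Matrix (Fin n) (Fin n) ℂ) (hH : H.IsHermitian)
    (A : Fin N → Matrix (Fin n) (Fin n) ℂ)
    (hherm : ∀ j, (A j).IsHermitian)
    (hcomm : ∀ i j, Commute (A i) (A j))
    (μ : Fin N → ℝ) (t : ℝ)
    (At : Fin N → Matrix (Fin n) (Fin n) ℂ)
    (hAt : ∀ j, At j =
      exp ((Complex.I * t) • H) * A j * exp (-(Complex.I * t) • H))
    (ρt : Matrix (Fin n) (Fin n) ℂ)
    (hρt : ρt = (Matrix.trace (exp (-(∑ j, (μ j : ℂ) • At j))))⁻¹ •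
      exp (-(∑ j, (μ j : ℂ) • At j)))
    (wt : Matrix (Fin n) (Fin n) ℂ → ℂ)
    (hwt : ∀ X, wt X = Matrix.trace (ρt * X))
    (a : Fin N → ℂ) (ha : ∀ j, a j = wt (At j))
    (c cinv : Matrix (Fin N) (Fin N) ℂ)
    (hc : ∀ i j, c i j = wt ((At i - a i • 1) * (At j - a j • 1)))
    (hinv : cinv * c = 1) (hinv' : c * cinv = 1)
    (Pt : Matrix (Fin n) (Fin n) ℂ → Matrix (Fin n) (Fin n) ℂ)
    (hPt : ∀ X, Pt X = wt X • 1 +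
      ∑ i, ∑ j, (cinv i j * wt (X * (At j - a j • 1))) • (At i - a i • 1)) :
    ∀ Y ∈ Submodule.span ℂ (insert (1 : Matrix (Fin n) (Fin n) ℂ) (Set.range At)),
      Pt (H * Y - Y * H) = 0 := by
  -- the At's mutually commute
  have hEE : exp (-(Complex.I * t) • H) * exp ((Complex.I * t) • H) = 1 := by
    rw [← Matrix.exp_add_of_commute _ _ (((Commute.refl H).smul_left _).smul_right _)]
    simp
  have hmul : ∀ i j, At i * At j =
      exp ((Complex.I * t) • H) * (A i * A j) * exp (-(Complex.I * t) • H) := by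
    intro i j
    rw [hAt i, hAt j]
    calc exp ((Complex.I * t) • H) * A i * exp (-(Complex.I * t) • H) *
          (exp ((Complex.I * t) • H) * A j * exp (-(Complex.I * t) • H))
        = exp ((Complex.I * t) • H) * A i *
          (exp (-(Complex.I * t) • H) * exp ((Complex.I * t) • H)) *
          A j * exp (-(Complex.I * t) • H) := by noncomm_ring
      _ = _ := by rw [hEE]; noncomm_ring
  have hAtcomm : ∀ i j, Commute (At i) (At j) := by
    intro i j
    show At i * At j = At j * At i
    rw [hmul i j, hmul j i, (hcomm i j).eq]
  -- ρt commutes with each At k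
  have hρcomm : ∀ k, ρt * At k = At k * ρt := by
    intro k
    rw [hρt]
    have hs : Commute (∑ j, (μ j : ℂ) • At j) (At k) :=
      Commute.sum_left _ _ _ fun j _ => (hAtcomm j k).smul_left _
    exact (Commute.smul_left ((hs.neg_left).exp_left) _).eq
  -- linearity of wt
  have hwadd : ∀ X X', wt (X + X') = wt X + wt X' := by
    intro X X'; simp [hwt, mul_add]
  have hwsmul : ∀ (r : ℂ) X, wt (r • X) = r * wt X := by
    intro r X; simp [hwt, Matrix.mul_smul, smul_eq_mul]
  have hw0 : wt 0 = 0 := by simp [hwt]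
  -- key vanishing
  have key : ∀ B C : Matrix (Fin n) (Fin n) ℂ, ρt * B = B * ρt → ρt * C = C * ρt →
      B * C = C * B → wt ((H * B - B * H) * C) = 0 := by
    intro B C h1 h2 h3
    rw [hwt]
    exact aux_trace ρt H B C h1 h2 h3
  -- commutation with the shifted observables
  have hρB : ∀ j, ρt * (At j - a j • 1) = (At j - a j • 1) * ρt := by
    intro j
    simp [Matrix.mul_sub, Matrix.sub_mul, hρcomm j, Matrix.mul_smul,
      Matrix.smul_mul]
  have hAB : ∀ k j, At k * (At j - a j • 1) = (At j - a j • 1) * At k := by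
    intro k j
    simp [Matrix.mul_sub, Matrix.sub_mul, (hAtcomm k j).eq, Matrix.mul_smul,
      Matrix.smul_mul]
  -- the two linear conditions hold on the span
  have hQ : ∀ Y ∈ Submodule.span ℂ
      (insert (1 : Matrix (Fin n) (Fin n) ℂ) (Set.range At)),
      wt (H * Y - Y * H) = 0 ∧
        ∀ j, wt ((H * Y - Y * H) * (At j - a j • 1)) = 0 := by
    intro Y hY
    induction hY using Submodule.span_induction with
    | mem x hx =>
      rcases hx with rfl | ⟨k, rfl⟩
      · constructor
        · simp [hw0]
        · intro j; simp [hw0]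
      · constructor
        · have := key (At k) 1 (hρcomm k) (by simp) (by simp)
          simpa using this
        · intro j
          exact key (At k) (At j - a j • 1) (hρcomm k) (hρB j) (hAB k j)
    | zero =>
      constructor
      · simp [hw0]
      · intro j; simp [hw0]
    | add x y _ _ hx hy =>
      have e : ∀ C : Matrix (Fin n) (Fin n) ℂ,
          (H * (x + y) - (x + y) * H) * C =
            (H * x - x * H) * C + (H * y - y * H) * C := by
        intro C; noncomm_ring
      constructor
      · have := e 1
        simp only [mul_one] at this
        rw [this, hwadd, hx.1, hy.1, add_zero]
      · intro j
        rw [e, hwadd, hx.2 j, hy.2 j, add_zero]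
    | smul r x _ hx =>
      have e : ∀ C : Matrix (Fin n) (Fin n) ℂ,
          (H * (r • x) - (r • x) * H) * C = r • ((H * x - x * H) * C) := by
        intro C
        rw [Matrix.mul_smul, Matrix.smul_mul, ← smul_sub, Matrix.smul_mul]
      constructor
      · have := e 1
        simp only [mul_one] at this
        rw [this, hwsmul, hx.1, mul_zero]
      · intro j
        rw [e, hwsmul, hx.2 j, mul_zero]
  intro Y hY
  obtain ⟨h1, h2⟩ := hQ Y hY
  rw [hPt, h1]
  simp only [h2, mul_zero, zero_smul, Finset.sum_const_zero, add_zero, zero_add]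
end

section
/- Let m > 0, L > 0 and ω_k = sqrt(k²/L² + m²) for k ∈ ℤ. Then for every δ ∈ (0, 1/2) there is a constant K (depending on m, L, δ) such that Σ_{q∈ℤ} ω_{k-q}^{-1} ω_q^{-1+δ} ≤ K ω_k^{-1+2δ} for all k ∈ ℤ. -/
/-- The dispersion relation `ω_k = √(k²/L² + m²)`. -/
noncomputable def omega (m L : ℝ) (k : ℤ) : ℝ :=
  Real.sqrt ((k : ℝ) ^ 2 / L ^ 2 + m ^ 2)

section aux

variable {m L : ℝ}

lemma omega_pos (hm : 0 < m) (k : ℤ) : 0 < omega m L k :=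
  Real.sqrt_pos.mpr (by positivity)

lemma abs_div_le_omega (hL : 0 < L) (m : ℝ) (k : ℤ) : |(k : ℝ)| / L ≤ omega m L k := by
  have h : |(k : ℝ)| / L = Real.sqrt ((k : ℝ) ^ 2 / L ^ 2) := by
    rw [show (k : ℝ) ^ 2 / L ^ 2 = ((k : ℝ) / L) ^ 2 by ring, Real.sqrt_sq_eq_abs,
      abs_div, abs_of_pos hL]
  rw [h]
  exact Real.sqrt_le_sqrt (by nlinarith [sq_nonneg m])

lemma omega_triangle (hm : 0 < m) (hL : 0 < L) (k q : ℤ) :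
    omega m L k ≤ omega m L (k - q) + omega m L q := by
  have hq := omega_pos (L := L) hm q
  have h1 : |((k : ℝ) - q)| / L ≤ omega m L (k - q) := by
    have := abs_div_le_omega hL m (k - q)
    push_cast at this
    exact this
  have h2 : |(q : ℝ)| / L ≤ omega m L q := abs_div_le_omega hL m q
  have key : omega m L k ≤ |((k : ℝ) - q)| / L + omega m L q := by
    set s := (k : ℝ)
    set t := (q : ℝ)
    set w := omega m L q with hw
    set A := |s - t| with hA
    have hw2 : w ^ 2 = t ^ 2 / L ^ 2 + m ^ 2 := Real.sq_sqrt (by positivity)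
    have hBw : |t| ≤ w * L := by rw [div_le_iff₀ hL] at h2; exact h2
    have hA0 : (0 : ℝ) ≤ A := abs_nonneg _
    have hrhs : 0 ≤ A / L + w := by positivity
    rw [show A / L + w = Real.sqrt ((A / L + w) ^ 2) from (Real.sqrt_sq hrhs).symm]
    apply Real.sqrt_le_sqrt
    have hAB : (s - t) * t ≤ A * |t| := by
      rw [hA, ← abs_mul]; exact le_abs_self _
    have key2 : s ^ 2 ≤ A ^ 2 + 2 * A * (w * L) + t ^ 2 := by
      nlinarith [sq_abs (s - t), mul_le_mul_of_nonneg_left hBw hA0]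
    have hL2 : (0 : ℝ) < L ^ 2 := by positivity
    have key2' : s ^ 2 / L ^ 2 ≤ (A ^ 2 + 2 * A * (w * L) + t ^ 2) / L ^ 2 :=
      (div_le_div_iff_of_pos_right hL2).mpr key2
    calc s ^ 2 / L ^ 2 + m ^ 2
        ≤ (A ^ 2 + 2 * A * (w * L) + t ^ 2) / L ^ 2 + m ^ 2 := by linarith
      _ = (A / L + w) ^ 2 := by
          have hL0 : L ≠ 0 := hL.ne'
          have hw2' : w ^ 2 * L ^ 2 = t ^ 2 + m ^ 2 * L ^ 2 := by
            rw [hw2]; field_simp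
          field_simp
          linear_combination -hw2'
  calc omega m L k ≤ |((k : ℝ) - q)| / L + omega m L q := key
    _ ≤ omega m L (k - q) + omega m L q := by
        have := h1; linarith

/-- Key pointwise inequality. -/
lemma key_pointwise {a b c δ : ℝ} (ha : 0 < a) (hb : 0 < b) (hc : 0 < c)
    (habc : c ≤ a + b) (hδ0 : 0 < δ) (hδ2 : δ < 1 / 2) :
    a⁻¹ * b ^ (-1 + δ) ≤
      (2 : ℝ) ^ (1 - 2 * δ) * c ^ (-1 + 2 * δ) * (a ^ (-(1 + δ)) + b ^ (-(1 + δ))) := by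
  have step1 : a⁻¹ * b ^ (-1 + δ) ≤
      (max a b) ^ (-1 + 2 * δ) * (min a b) ^ (-(1 + δ)) := by
    rcases le_total a b with h | h
    · rw [max_eq_right h, min_eq_left h]
      have e1 : a⁻¹ = a ^ (-(1 + δ)) * a ^ δ := by
        rw [← Real.rpow_add ha, show -(1 + δ) + δ = -1 by ring, Real.rpow_neg_one]
      have e2 : a ^ δ ≤ b ^ δ := Real.rpow_le_rpow ha.le h hδ0.le
      have e3 : b ^ δ * b ^ (-1 + δ) = b ^ (-1 + 2 * δ) := by
        rw [← Real.rpow_add hb]; ring_nf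
      calc a⁻¹ * b ^ (-1 + δ) = a ^ (-(1 + δ)) * (a ^ δ * b ^ (-1 + δ)) := by
            rw [e1]; ring
        _ ≤ a ^ (-(1 + δ)) * (b ^ δ * b ^ (-1 + δ)) := by
            apply mul_le_mul_of_nonneg_left _ (Real.rpow_nonneg ha.le _)
            exact mul_le_mul_of_nonneg_right e2 (Real.rpow_nonneg hb.le _)
        _ = b ^ (-1 + 2 * δ) * a ^ (-(1 + δ)) := by rw [e3]; ring
    · rw [max_eq_left h, min_eq_right h]
      have e1 : a⁻¹ = a ^ (-1 + 2 * δ) * a ^ (-(2 * δ)) := by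
        rw [← Real.rpow_add ha, show -1 + 2 * δ + -(2 * δ) = -1 by ring, Real.rpow_neg_one]
      have e2 : a ^ (-(2 * δ)) ≤ b ^ (-(2 * δ)) :=
        Real.rpow_le_rpow_of_nonpos hb h (by linarith)
      have e3 : b ^ (-(2 * δ)) * b ^ (-1 + δ) = b ^ (-(1 + δ)) := by
        rw [← Real.rpow_add hb]; ring_nf
      calc a⁻¹ * b ^ (-1 + δ) = a ^ (-1 + 2 * δ) * (a ^ (-(2 * δ)) * b ^ (-1 + δ)) := by
            rw [e1]; ring
        _ ≤ a ^ (-1 + 2 * δ) * (b ^ (-(2 * δ)) * b ^ (-1 + δ)) := by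
            apply mul_le_mul_of_nonneg_left _ (Real.rpow_nonneg ha.le _)
            exact mul_le_mul_of_nonneg_right e2 (Real.rpow_nonneg hb.le _)
        _ = a ^ (-1 + 2 * δ) * b ^ (-(1 + δ)) := by rw [e3]
  have hmaxpos : 0 < max a b := lt_max_of_lt_left ha
  have hc2 : c / 2 ≤ max a b := by
    rcases le_total a b with h | h
    · rw [max_eq_right h]; linarith [habc, h]
    · rw [max_eq_left h]; linarith [habc, h]
  have step2 : (max a b) ^ (-1 + 2 * δ) ≤ (2 : ℝ) ^ (1 - 2 * δ) * c ^ (-1 + 2 * δ) := by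
    have h1 : (max a b) ^ (-1 + 2 * δ) ≤ (c / 2) ^ (-1 + 2 * δ) :=
      Real.rpow_le_rpow_of_nonpos (by positivity) hc2 (by linarith)
    have h2 : (c / 2) ^ (-1 + 2 * δ) = (2 : ℝ) ^ (1 - 2 * δ) * c ^ (-1 + 2 * δ) := by
      rw [Real.div_rpow hc.le (by norm_num : (0:ℝ) ≤ 2), div_eq_mul_inv,
        ← Real.rpow_neg (by norm_num : (0:ℝ) ≤ 2), show -(-1 + 2 * δ) = 1 - 2 * δ by ring]
      ring
    linarith [h1, h2.le, h2.ge]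
  have step3 : (min a b) ^ (-(1 + δ)) ≤ a ^ (-(1 + δ)) + b ^ (-(1 + δ)) := by
    rcases min_cases a b with ⟨h, _⟩ | ⟨h, _⟩ <;> rw [h]
    · exact le_add_of_nonneg_right (Real.rpow_nonneg hb.le _)
    · exact le_add_of_nonneg_left (Real.rpow_nonneg ha.le _)
  have hmin : 0 ≤ (min a b) ^ (-(1 + δ)) := Real.rpow_nonneg (le_min ha.le hb.le) _
  calc a⁻¹ * b ^ (-1 + δ) ≤ (max a b) ^ (-1 + 2 * δ) * (min a b) ^ (-(1 + δ)) := step1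
    _ ≤ ((2 : ℝ) ^ (1 - 2 * δ) * c ^ (-1 + 2 * δ)) * (min a b) ^ (-(1 + δ)) :=
        mul_le_mul_of_nonneg_right step2 hmin
    _ ≤ ((2 : ℝ) ^ (1 - 2 * δ) * c ^ (-1 + 2 * δ)) * (a ^ (-(1 + δ)) + b ^ (-(1 + δ))) :=
        mul_le_mul_of_nonneg_left step3 (by positivity)

lemma summable_g (hm : 0 < m) (hL : 0 < L) {δ : ℝ} (hδ0 : 0 < δ) :
    Summable (fun q : ℤ => (omega m L q) ^ (-(1 + δ))) := by
  apply (Finset.summable_compl_iff ({0} : Finset ℤ)).mp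
  have hsum : Summable (fun q : ℤ => L ^ (1 + δ) * |(q : ℝ)| ^ (-(1 + δ))) :=
    (Real.summable_abs_int_rpow (by linarith)).mul_left _
  apply Summable.of_nonneg_of_le
    (fun q => Real.rpow_nonneg (omega_pos hm _).le _)
    (fun q => ?_) (hsum.subtype _)
  obtain ⟨q, hq⟩ := q
  simp only [Finset.mem_singleton] at hq
  have hq0 : (0 : ℝ) < |(q : ℝ)| := by
    simp only [abs_pos, ne_eq, Int.cast_eq_zero]; exact hq
  have h1 : |(q : ℝ)| / L ≤ omega m L q := abs_div_le_omega hL m q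
  have h2 : (omega m L q) ^ (-(1 + δ)) ≤ (|(q : ℝ)| / L) ^ (-(1 + δ)) :=
    Real.rpow_le_rpow_of_nonpos (by positivity) h1 (by linarith)
  have h3 : (|(q : ℝ)| / L) ^ (-(1 + δ)) = L ^ (1 + δ) * |(q : ℝ)| ^ (-(1 + δ)) := by
    rw [Real.div_rpow (abs_nonneg _) hL.le, div_eq_mul_inv, ← Real.rpow_neg hL.le,
      neg_neg]
    ring
  calc (omega m L q) ^ (-(1 + δ)) ≤ (|(q : ℝ)| / L) ^ (-(1 + δ)) := h2
    _ = L ^ (1 + δ) * |(q : ℝ)| ^ (-(1 + δ)) := h3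

end aux

/-- For `m, L > 0` and `δ ∈ (0, 1/2)` there is a constant `K` such that
`Σ_{q∈ℤ} ω_{k-q}⁻¹ ω_q^{-1+δ} ≤ K ω_k^{-1+2δ}` for all `k ∈ ℤ`. -/
theorem stmt_11 (m L : ℝ) (hm : 0 < m) (hL : 0 < L) (δ : ℝ)
    (hδ : δ ∈ Set.Ioo (0 : ℝ) (1 / 2)) :
    ∃ K : ℝ, ∀ k : ℤ,
      (∑' q : ℤ, (omega m L (k - q))⁻¹ * (omega m L q) ^ (-1 + δ)) ≤
        K * (omega m L k) ^ (-1 + 2 * δ) := by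
  obtain ⟨hδ0, hδ2⟩ := hδ
  set g : ℤ → ℝ := fun q => (omega m L q) ^ (-(1 + δ)) with hg_def
  have hg : Summable g := summable_g hm hL hδ0
  set S : ℝ := ∑' q : ℤ, g q with hS_def
  refine ⟨(2 : ℝ) ^ (1 - 2 * δ) * (S + S), fun k => ?_⟩
  set c := omega m L k with hc_def
  have hcpos : 0 < c := omega_pos hm k
  set f : ℤ → ℝ := fun q => (omega m L (k - q))⁻¹ * (omega m L q) ^ (-1 + δ) with hf_def
  have hfg : ∀ q, f q ≤ (2 : ℝ) ^ (1 - 2 * δ) * c ^ (-1 + 2 * δ) * (g (k - q) + g q) :=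
    fun q => key_pointwise (omega_pos hm (k - q)) (omega_pos hm q) hcpos
      (omega_triangle hm hL k q) hδ0 hδ2
  have hg' : Summable (fun q : ℤ => g (k - q)) := by
    have := (Equiv.subLeft k).summable_iff.mpr hg
    simpa [Function.comp_def, Equiv.subLeft] using this
  have hh : Summable (fun q : ℤ =>
      (2 : ℝ) ^ (1 - 2 * δ) * c ^ (-1 + 2 * δ) * (g (k - q) + g q)) :=
    (hg'.add hg).mul_left _
  have hf : Summable f :=
    Summable.of_nonneg_of_le
      (fun q => mul_nonneg (inv_nonneg.mpr (omega_pos hm _).le)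
        (Real.rpow_nonneg (omega_pos hm _).le _)) hfg hh
  have shift_eq : (∑' q : ℤ, g (k - q)) = S := by
    have := (Equiv.subLeft k).tsum_eq g
    simpa [Equiv.subLeft] using this
  calc (∑' q : ℤ, f q)
      ≤ ∑' q : ℤ, (2 : ℝ) ^ (1 - 2 * δ) * c ^ (-1 + 2 * δ) * (g (k - q) + g q) :=
        hf.tsum_le_tsum hfg hh
    _ = (2 : ℝ) ^ (1 - 2 * δ) * c ^ (-1 + 2 * δ) * ((∑' q : ℤ, g (k - q)) + S) := by
        rw [tsum_mul_left, hg'.tsum_add hg]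
    _ = (2 : ℝ) ^ (1 - 2 * δ) * (S + S) * c ^ (-1 + 2 * δ) := by
        rw [shift_eq]; ring
end
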